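/- (Independent block comparison.) Let T = 2τm for positive integers τ, m, and define the 'odd' index blocks H_j = {2(j−1)m + 1, ..., (2j−1)m} for j = 1,...,τ. Let ν be the joint law, under the stationary chain of length T, of the τ blocks ((z_t)_{t∈H_1}, ..., (z_t)_{t∈H_τ}) as a probability measure on (S^m)^τ, and let ν̃ be the τ-fold product measure whose factors each equal the law of (z_1,...,z_m) under the stationary chain (which, by stationarity, is the common marginal law of every block (z_t)_{t∈H_j}). Then for every subset A ⊆ (S^m)^τ, |ν(A) − ν̃(A)| ≤ τ·β(m). -/

import Mathlib

set_option linter.unusedSectionVars false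
set_option linter.unusedVariables false

section Aux
variable {S : Type} [Fintype S] [DecidableEq S]

/-- trajectory weight after a start state -/
noncomputable def gseq (Q : Matrix S S ℝ) : S → (n : ℕ) → (Fin n → S) → ℝ
  | _, 0, _ => 1
  | x, n+1, Y => Q x (Y 0) * gseq Q (Y 0) n (Fin.tail Y)

def lastc (x : S) {n : ℕ} (Y : Fin n → S) : S := (Fin.cons x Y : Fin (n+1) → S) (Fin.last n)

@[simp] lemma lastc_zero (x : S) (Y : Fin 0 → S) : lastc x Y = x := rfl

lemma lastc_succ (x : S) {n : ℕ} (Y : Fin (n+1) → S) : lastc x Y = Y (Fin.last n) := by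
  rw [lastc]
  rw [show (Fin.last (n+1)) = Fin.succ (Fin.last n) from (Fin.succ_last n).symm, Fin.cons_succ]

lemma lastc_cons (x y : S) {n : ℕ} (Y : Fin n → S) :
    lastc x (Fin.cons y Y) = lastc y Y := by
  cases n with
  | zero => simp [lastc_succ]
  | succ n => rw [lastc_succ, lastc_succ, ← Fin.succ_last, Fin.cons_succ]

lemma lastc_self_tail {n : ℕ} (Y : Fin (n+1) → S) :
    lastc (Y 0) (Fin.tail Y) = Y (Fin.last n) := by
  rw [lastc, Fin.cons_self_tail]

lemma sum_cons_fun {α : Type} [Fintype α] (n : ℕ) (φ : (Fin (n+1) → α) → ℝ) :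
    ∑ X : Fin (n+1) → α, φ X = ∑ x : α, ∑ Y : Fin n → α, φ (Fin.cons x Y) := by
  rw [← (Fin.consEquiv (fun _ : Fin (n+1) => α)).sum_comp φ, Fintype.sum_prod_type]
  rfl

lemma sum_snoc_fun {α : Type} [Fintype α] (n : ℕ) (φ : (Fin (n+1) → α) → ℝ) :
    ∑ X : Fin (n+1) → α, φ X = ∑ x : α, ∑ Y : Fin n → α, φ (Fin.snoc Y x) := by
  rw [← (Fin.snocEquiv (fun _ : Fin (n+1) => α)).sum_comp φ, Fintype.sum_prod_type]
  rfl

lemma sum_append_fun {α : Type} [Fintype α] (k n : ℕ) (φ : (Fin (k+n) → α) → ℝ) :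
    ∑ X : Fin (k+n) → α, φ X =
      ∑ W : Fin k → α, ∑ V : Fin n → α, φ (Fin.append W V) := by
  rw [← (Fin.appendEquiv k n).sum_comp φ, Fintype.sum_prod_type]
  rfl

variable (Q : Matrix S S ℝ)

lemma gseq_nonneg (hQ0 : ∀ x y, 0 ≤ Q x y) :
    ∀ (n : ℕ) (x : S) (Y : Fin n → S), 0 ≤ gseq Q x n Y
  | 0, x, Y => zero_le_one
  | n+1, x, Y => mul_nonneg (hQ0 _ _) (gseq_nonneg hQ0 n _ _)

lemma gseq_sum (hQ1 : ∀ x, ∑ y, Q x y = 1) :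
    ∀ (n : ℕ) (x : S), ∑ Y : Fin n → S, gseq Q x n Y = 1 := by
  intro n
  induction n with
  | zero => intro x; simp [gseq]
  | succ n ih =>
    intro x
    rw [sum_cons_fun]
    have : ∀ y : S, ∑ Y : Fin n → S, gseq Q x (n+1) (Fin.cons y Y) = Q x y := by
      intro y
      simp only [gseq, Fin.cons_zero, Fin.tail_cons]
      rw [← Finset.mul_sum, ih y, mul_one]
    simp only [this, hQ1]

lemma gseq_snoc : ∀ (n : ℕ) (x : S) (Y : Fin n → S) (z : S),
    gseq Q x (n+1) (Fin.snoc Y z) = gseq Q x n Y * Q (lastc x Y) z := by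
  intro n
  induction n with
  | zero =>
    intro x Y z
    simp [gseq, lastc, Fin.snoc]
  | succ n ih =>
    intro x Y z
    have htail : ∀ i, (Fin.tail (Fin.snoc Y z : Fin (n+2) → S) : Fin (n+1) → S) i = (Fin.snoc (Fin.tail Y : Fin n → S) z : Fin (n+1) → S) i := by
      intro i
      cases i using Fin.lastCases with
      | last => simp [Fin.tail, Fin.succ_last]
      | cast j => simp [Fin.tail, Fin.succ_castSucc, -Fin.castSucc_succ]
    have hzero : (Fin.snoc Y z : Fin (n+2) → S) 0 = Y 0 := by
      have : (0 : Fin (n+2)) = Fin.castSucc 0 := rfl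
      rw [this, Fin.snoc_castSucc]
    have htail' : (Fin.tail (Fin.snoc Y z : Fin (n+2) → S) : Fin (n+1) → S) = (Fin.snoc (Fin.tail Y : Fin n → S) z : Fin (n+1) → S) :=
      funext htail
    have gseq_succ : ∀ (k : ℕ) (x : S) (W : Fin (k+1) → S),
        gseq Q x (k+1) W = Q x (W 0) * gseq Q (W 0) k (Fin.tail W) := fun _ _ _ => rfl
    calc gseq Q x (n+2) (Fin.snoc Y z)
        = Q x (Y 0) * gseq Q (Y 0) (n+1) (Fin.snoc (Fin.tail Y) z) := by
          rw [gseq_succ (n+1) x (Fin.snoc Y z), hzero, htail']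
      _ = Q x (Y 0) * (gseq Q (Y 0) n (Fin.tail Y) * Q (lastc (Y 0) (Fin.tail Y)) z) := by
          rw [ih]
      _ = gseq Q x (n+1) Y * Q (lastc x Y) z := by
          rw [lastc_self_tail, lastc_succ, gseq_succ n x Y]; ring

lemma gseq_append : ∀ (n k : ℕ) (x : S) (W : Fin k → S) (V : Fin n → S),
    gseq Q x (k+n) (Fin.append W V) = gseq Q x k W * gseq Q (lastc x W) n V := by
  intro n
  induction n with
  | zero =>
    intro k x W V
    have hV : Fin.append W V = W := by
      rw [Fin.append_right_nil W V rfl]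
      funext i; rfl
    rw [hV]
    simp [gseq]
  | succ n ih =>
    intro k x W V
    have h1 : Fin.append W V
        = (Fin.snoc (Fin.append W (Fin.init V)) (V (Fin.last n)) : Fin (k+n+1) → S) := by
      conv_lhs => rw [← Fin.snoc_init_self V]
      rw [Fin.append_snoc]
    rw [h1]
    have h2 : gseq Q x (k + (n+1)) (Fin.snoc (Fin.append W (Fin.init V)) (V (Fin.last n)))
        = gseq Q x (k+n) (Fin.append W (Fin.init V))
          * Q (lastc x (Fin.append W (Fin.init V))) (V (Fin.last n)) :=
      gseq_snoc Q (k+n) x _ _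
    have h3 : gseq Q (lastc x W) (n+1) V
        = gseq Q (lastc x W) n (Fin.init V)
          * Q (lastc (lastc x W) (Fin.init V)) (V (Fin.last n)) := by
      conv_lhs => rw [← Fin.snoc_init_self V]
      exact gseq_snoc Q n _ _ _
    rw [h2, ih, h3, mul_assoc]
    have key : lastc x (Fin.append W (Fin.init V)) = lastc (lastc x W) (Fin.init V) := by
      cases n with
      | zero =>
        have : Fin.append W (Fin.init V) = W := by
          rw [Fin.append_right_nil W _ rfl]; funext i; rfl
        rw [this]; simp
      | succ n =>
        rw [lastc_succ, lastc_succ]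
        have h4 : (Fin.last (k+n) : Fin (k + (n+1))) = Fin.natAdd k (Fin.last n) :=
          Fin.ext (by simp)
        calc Fin.append W (Fin.init V) (Fin.last (k+n))
            = Fin.append W (Fin.init V) (Fin.natAdd k (Fin.last n)) := by rw [← h4]
          _ = Fin.init V (Fin.last n) := Fin.append_right _ _ _
    rw [key]

lemma gseq_succ' : ∀ (k : ℕ) (x : S) (W : Fin (k+1) → S),
    gseq Q x (k+1) W = Q x (W 0) * gseq Q (W 0) k (Fin.tail W) := fun _ _ _ => rfl

lemma gseq_cons (n : ℕ) (x y : S) (Y : Fin n → S) :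
    gseq Q x (n+1) (Fin.cons y Y) = Q x y * gseq Q y n Y := by
  rw [gseq_succ', Fin.cons_zero, Fin.tail_cons]

lemma sum_gseq_lastc : ∀ (n : ℕ) (x : S) (ψ : S → ℝ),
    ∑ Y : Fin n → S, gseq Q x n Y * ψ (lastc x Y) = ∑ z, (Q^n) x z * ψ z := by
  intro n
  induction n with
  | zero =>
    intro x ψ
    simp [gseq, Matrix.one_apply]
  | succ n ih =>
    intro x ψ
    rw [sum_cons_fun]
    have h1 : ∀ y, ∑ Y : Fin n → S, gseq Q x (n+1) (Fin.cons y Y) * ψ (lastc x (Fin.cons y Y))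
        = Q x y * ∑ z, (Q^n) y z * ψ z := by
      intro y
      rw [← ih y ψ, Finset.mul_sum]
      refine Finset.sum_congr rfl fun Y _ => ?_
      rw [gseq_cons, lastc_cons]
      ring
    simp only [h1]
    rw [pow_succ']
    simp only [Matrix.mul_apply, Finset.sum_mul, Finset.mul_sum]
    rw [Finset.sum_comm]
    refine Finset.sum_congr rfl fun y _ => Finset.sum_congr rfl fun z _ => by ring

lemma rowsum_pow (hQ1 : ∀ x, ∑ y, Q x y = 1) (n : ℕ) (x : S) :
    ∑ y, (Q^n) x y = 1 := by
  have h := sum_gseq_lastc Q n x (fun _ => 1)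
  simp only [mul_one] at h
  rw [← h, gseq_sum Q hQ1]

lemma statPow (π : S → ℝ) (hπstat : ∀ y, ∑ x, π x * Q x y = π y) :
    ∀ (n : ℕ) (z : S), ∑ x, π x * (Q^n) x z = π z := by
  intro n
  induction n with
  | zero =>
    intro z
    simp [Matrix.one_apply]
  | succ n ih =>
    intro z
    rw [pow_succ]
    simp only [Matrix.mul_apply, Finset.mul_sum]
    rw [Finset.sum_comm]
    have : ∀ y, ∑ x, π x * ((Q^n) x y * Q y z) = π y * Q y z := by
      intro y
      rw [show ∀ w, w = π y * Q y z ↔ w = π y * Q y z from fun w => Iff.rfl]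
      calc ∑ x, π x * ((Q^n) x y * Q y z) = (∑ x, π x * (Q^n) x y) * Q y z := by
            rw [Finset.sum_mul]; exact Finset.sum_congr rfl fun x _ => by ring
        _ = π y * Q y z := by rw [ih y]
    simp only [this]
    exact hπstat z

variable (m' : ℕ)

noncomputable def wb (b : Fin (m'+1) → S) : ℝ := gseq Q (b 0) m' (Fin.tail b)

noncomputable def gvF : (S → ℝ) → (t : ℕ) → (Fin t → (Fin (m'+1) → S)) → ℝ
  | _, 0, _ => 1
  | f, t+1, a =>
    f (a 0 0) * wb Q m' (a 0) *
      gvF (fun y => (Q^(m'+2)) (a 0 (Fin.last m')) y) t (Fin.tail a)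

lemma wb_cons (x : S) (b : Fin m' → S) : wb Q m' (Fin.cons x b) = gseq Q x m' b := by
  rw [wb, Fin.cons_zero, Fin.tail_cons]

lemma gvF_cons (f : S → ℝ) (t : ℕ) (b : Fin (m'+1) → S) (a : Fin t → (Fin (m'+1) → S)) :
    gvF Q m' f (t+1) (Fin.cons b a)
      = f (b 0) * wb Q m' b *
          gvF Q m' (fun y => (Q^(m'+2)) (b (Fin.last m')) y) t a := by
  simp only [gvF, Fin.cons_zero, Fin.tail_cons]

lemma gvF_sum (hQ1 : ∀ x, ∑ y, Q x y = 1) :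
    ∀ (t : ℕ) (f : S → ℝ), (∑ z, f z = 1) →
      ∑ a : Fin t → (Fin (m'+1) → S), gvF Q m' f t a = 1 := by
  intro t
  induction t with
  | zero => intro f hf; simp [gvF]
  | succ t ih =>
    intro f hf
    rw [sum_cons_fun]
    have h1 : ∀ b : Fin (m'+1) → S,
        ∑ a : Fin t → (Fin (m'+1) → S), gvF Q m' f (t+1) (Fin.cons b a)
          = f (b 0) * wb Q m' b := by
      intro b
      simp only [gvF_cons]
      rw [← Finset.mul_sum, ih _ (rowsum_pow Q hQ1 (m'+2) _), mul_one]
    simp only [h1]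
    rw [sum_cons_fun]
    have h2 : ∀ x, ∑ b : Fin m' → S,
        f ((Fin.cons x b : Fin (m'+1) → S) 0) * wb Q m' (Fin.cons x b) = f x := by
      intro x
      simp only [Fin.cons_zero, wb_cons]
      rw [← Finset.mul_sum, gseq_sum Q hQ1, mul_one]
    simp only [h2]
    exact hf

lemma gvF_nonneg (hQ0 : ∀ x y, 0 ≤ Q x y) :
    ∀ (t : ℕ) (f : S → ℝ), (∀ z, 0 ≤ f z) →
      ∀ a, 0 ≤ gvF Q m' f t a := by
  have hpow : ∀ (n : ℕ) (x y : S), 0 ≤ (Q^n) x y := by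
    intro n
    induction n with
    | zero => intro x y; rw [pow_zero]; by_cases h : x = y <;> simp [Matrix.one_apply, h]
    | succ n ih =>
      intro x y
      rw [pow_succ, Matrix.mul_apply]
      exact Finset.sum_nonneg fun z _ => mul_nonneg (ih x z) (hQ0 z y)
  intro t
  induction t with
  | zero => intro f hf a; rw [show gvF Q m' f 0 a = 1 from rfl]; norm_num
  | succ t ih =>
    intro f hf a
    rw [show gvF Q m' f (t+1) a = f (a 0 0) * wb Q m' (a 0) *
      gvF Q m' (fun y => (Q^(m'+2)) (a 0 (Fin.last m')) y) t (Fin.tail a) from rfl]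
    exact mul_nonneg (mul_nonneg (hf _) (gseq_nonneg Q hQ0 _ _ _))
      (ih _ (fun z => hpow (m'+2) _ z) _)

def Len : ℕ → ℕ
  | 0 => m' + (m'+1)
  | t+1 => m' + ((m'+2) + Len t)

lemma Len_val : ∀ t, Len m' t + 1 = 2 * (t+1) * (m'+1) := by
  intro t
  induction t with
  | zero => simp [Len]; ring
  | succ t ih =>
    rw [show Len m' (t+1) = m' + ((m'+2) + Len m' t) from rfl,
      show 2 * (t+1+1) * (m'+1) = 2*(t+1)*(m'+1) + 2*(m'+1) from by ring, ← ih]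
    omega

def blk : (t : ℕ) → S → (Fin (Len m' t) → S) → Fin (t+1) → Fin (m'+1) → S
  | 0, x, Y => fun _ => Fin.cons x (fun i => Y (Fin.castAdd (m'+1) i))
  | t+1, x, Y =>
    Fin.cons (Fin.cons x (fun i => Y (Fin.castAdd ((m'+2) + Len m' t) i)))
      (blk t (Y (Fin.natAdd m' (Fin.castAdd (Len m' t) (Fin.last (m'+1)))))
        (fun i => Y (Fin.natAdd m' (Fin.natAdd (m'+2) i))))

lemma cons_mk_succ {α : Type} {n : ℕ} (x : α) (Y : Fin n → α) (p : ℕ) (h : p+1 < n+1) :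
    (Fin.cons x Y : Fin (n+1) → α) ⟨p+1, h⟩ = Y ⟨p, Nat.lt_of_succ_lt_succ h⟩ := by
  rw [show (⟨p+1, h⟩ : Fin (n+1)) = Fin.succ ⟨p, Nat.lt_of_succ_lt_succ h⟩ from rfl,
    Fin.cons_succ]

lemma blk_apply : ∀ (t : ℕ) (x : S) (Y : Fin (Len m' t) → S) (j : Fin (t+1)) (i : Fin (m'+1))
    (hp : 2 * j.1 * (m'+1) + i.1 < Len m' t + 1),
    blk m' t x Y j i = (Fin.cons x Y : Fin (Len m' t + 1) → S) ⟨2 * j.1 * (m'+1) + i.1, hp⟩ := by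
  intro t
  induction t with
  | zero =>
    intro x Y j i hp
    have hj : j = 0 := Fin.ext (by simpa using Nat.lt_one_iff.mp j.isLt)
    subst hj
    rw [show blk m' 0 x Y 0 i = (Fin.cons x (fun i => Y (Fin.castAdd (m'+1) i)) : Fin (m'+1) → S) i from rfl]
    revert hp
    refine Fin.cases ?_ ?_ i <;> clear i
    · intro hp
      rw [Fin.cons_zero]
      rw [show (⟨2*(0:Fin 1).1*(m'+1) + (0:Fin (m'+1)).1, hp⟩ : Fin (Len m' 0 + 1)) = 0 from
        Fin.ext (by simp), Fin.cons_zero]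
    · intro i' hp
      rw [Fin.cons_succ]
      rw [show (⟨2*(0:Fin 1).1*(m'+1) + (Fin.succ i').1, hp⟩ : Fin (Len m' 0 + 1))
          = Fin.succ ⟨i'.1, by have := i'.isLt; have := Len_val m' 0; omega⟩ from
        Fin.ext (by simp), Fin.cons_succ]
      exact congrArg Y (Fin.ext (by simp))
  | succ t ih =>
    intro x Y j i hp
    revert hp
    refine Fin.cases ?_ ?_ j <;> clear j
    · -- j = 0
      intro hp
      rw [show blk m' (t+1) x Y 0 i
          = (Fin.cons x (fun i => Y (Fin.castAdd ((m'+2) + Len m' t) i)) : Fin (m'+1) → S) i from by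
        rw [show blk m' (t+1) x Y
            = Fin.cons (Fin.cons x (fun i => Y (Fin.castAdd ((m'+2) + Len m' t) i)))
              (blk m' t (Y (Fin.natAdd m' (Fin.castAdd (Len m' t) (Fin.last (m'+1)))))
                (fun i => Y (Fin.natAdd m' (Fin.natAdd (m'+2) i)))) from rfl, Fin.cons_zero]]
      revert hp
      refine Fin.cases ?_ ?_ i <;> clear i
      · intro hp
        rw [Fin.cons_zero]
        rw [show (⟨2*(0:Fin (t+2)).1*(m'+1) + (0:Fin (m'+1)).1, hp⟩ : Fin (Len m' (t+1) + 1)) = 0 from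
          Fin.ext (by simp), Fin.cons_zero]
      · intro i' hp
        rw [Fin.cons_succ]
        rw [show (⟨2*(0:Fin (t+2)).1*(m'+1) + (Fin.succ i').1, hp⟩ : Fin (Len m' (t+1) + 1))
            = Fin.succ ⟨i'.1, by have := i'.isLt; have h : Len m' (t+1) = m' + ((m'+2) + Len m' t) := rfl; omega⟩ from
          Fin.ext (by simp), Fin.cons_succ]
        exact congrArg Y (Fin.ext (by simp))
    · -- j = succ j'
      intro j' hp
      rw [show blk m' (t+1) x Y (Fin.succ j') i
          = blk m' t (Y (Fin.natAdd m' (Fin.castAdd (Len m' t) (Fin.last (m'+1)))))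
              (fun i => Y (Fin.natAdd m' (Fin.natAdd (m'+2) i))) j' i from by
        rw [show blk m' (t+1) x Y
            = Fin.cons (Fin.cons x (fun i => Y (Fin.castAdd ((m'+2) + Len m' t) i)))
              (blk m' t (Y (Fin.natAdd m' (Fin.castAdd (Len m' t) (Fin.last (m'+1)))))
                (fun i => Y (Fin.natAdd m' (Fin.natAdd (m'+2) i)))) from rfl, Fin.cons_succ]]
      have hlen : Len m' (t+1) = m' + ((m'+2) + Len m' t) := rfl
      have hs : (Fin.succ j').1 = j'.1 + 1 := rfl
      have hP : 2*(Fin.succ j').1*(m'+1) + i.1 = (2*j'.1*(m'+1) + i.1) + (2*m'+2) := by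
        rw [hs]; ring
      have hp' : 2*j'.1*(m'+1) + i.1 < Len m' t + 1 := by omega
      rw [ih _ _ j' i hp']
      by_cases h0 : 2*j'.1*(m'+1) + i.1 = 0
      · rw [show (⟨2*j'.1*(m'+1) + i.1, hp'⟩ : Fin (Len m' t + 1)) = 0 from
          Fin.ext (by simp [h0]), Fin.cons_zero]
        rw [show (⟨2*(Fin.succ j').1*(m'+1) + i.1, hp⟩ : Fin (Len m' (t+1) + 1))
            = Fin.succ ⟨m' + (m'+1), by omega⟩ from Fin.ext
              (by show 2*(Fin.succ j').1*(m'+1) + i.1 = (m' + (m'+1)) + 1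
                  rw [hP]; omega), Fin.cons_succ]
        exact congrArg Y (Fin.ext (by simp))
      · rw [show (⟨2*j'.1*(m'+1) + i.1, hp'⟩ : Fin (Len m' t + 1))
            = Fin.succ ⟨2*j'.1*(m'+1) + i.1 - 1, by omega⟩ from Fin.ext
              (by show 2*j'.1*(m'+1) + i.1 = (2*j'.1*(m'+1) + i.1 - 1) + 1
                  omega),
          Fin.cons_succ]
        rw [show (⟨2*(Fin.succ j').1*(m'+1) + i.1, hp⟩ : Fin (Len m' (t+1) + 1))
            = Fin.succ ⟨m' + ((m'+2) + (2*j'.1*(m'+1) + i.1 - 1)), by omega⟩ from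
          Fin.ext (by show 2*(Fin.succ j').1*(m'+1) + i.1
                        = (m' + ((m'+2) + (2*j'.1*(m'+1) + i.1 - 1))) + 1
                      rw [hP]; omega), Fin.cons_succ]
        exact congrArg Y (Fin.ext (by simp))

lemma cons_cons_default (x : S) (U : Fin m' → S) (a : Fin 0 → (Fin (m'+1) → S)) :
    (Fin.cons (Fin.cons x U) a : Fin 1 → (Fin (m'+1) → S)) = fun _ => Fin.cons x U := by
  funext j
  have hj : j = 0 := Fin.ext (by simpa using Nat.lt_one_iff.mp j.isLt)
  rw [hj, Fin.cons_zero]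

lemma claimB (hQ1 : ∀ x, ∑ y, Q x y = 1) :
    ∀ (t : ℕ) (x : S) (F : (Fin (t+1) → Fin (m'+1) → S) → ℝ),
    ∑ Y : Fin (Len m' t) → S, F (blk m' t x Y) * gseq Q x (Len m' t) Y
    = ∑ b : Fin m' → S, ∑ a : Fin t → (Fin (m'+1) → S),
        F (Fin.cons (Fin.cons x b) a)
          * (gseq Q x m' b * gvF Q m' (fun y => (Q^(m'+2)) (lastc x b) y) t a) := by
  intro t
  induction t with
  | zero =>
    intro x F
    refine Eq.trans (sum_append_fun m' (m'+1)
      fun Y => F (blk m' 0 x Y) * gseq Q x (Len m' 0) Y) ?_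
    refine Finset.sum_congr rfl fun U _ => ?_
    have h1 : ∀ g : Fin (m'+1) → S,
        F (blk m' 0 x (Fin.append U g)) * gseq Q x (Len m' 0) (Fin.append U g)
        = F (fun _ => Fin.cons x U) * gseq Q x m' U * gseq Q (lastc x U) (m'+1) g := by
      intro g
      have hb : blk m' 0 x (Fin.append U g) = fun _ => Fin.cons x U := by
        rw [show blk m' 0 x (Fin.append U g)
            = fun _ : Fin 1 => Fin.cons x (fun i => Fin.append U g (Fin.castAdd (m'+1) i))
          from rfl]
        funext j
        have hU : (fun i => Fin.append U g (Fin.castAdd (m'+1) i)) = U :=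
          funext fun i => Fin.append_left U g i
        rw [hU]
      have hg : gseq Q x (Len m' 0) (Fin.append U g)
          = gseq Q x m' U * gseq Q (lastc x U) (m'+1) g :=
        gseq_append Q (m'+1) m' x U g
      rw [hb, hg, mul_assoc]
    simp only [h1]
    rw [← Finset.mul_sum, gseq_sum Q hQ1, mul_one]
    rw [Fintype.sum_unique
      (fun a : Fin 0 → (Fin (m'+1) → S) => F (Fin.cons (Fin.cons x U) a)
        * (gseq Q x m' U * gvF Q m' (fun y => (Q^(m'+2)) (lastc x U) y) 0 a))]
    rw [show gvF Q m' (fun y => (Q^(m'+2)) (lastc x U) y) 0 default = 1 from rfl,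
      mul_one, cons_cons_default]
  | succ t ih =>
    intro x F
    have hlc : ∀ (z : S) (b' : Fin m' → S),
        (Fin.cons z b' : Fin (m'+1) → S) (Fin.last m') = lastc z b' := fun _ _ => rfl
    refine Eq.trans (sum_append_fun m' ((m'+2) + Len m' t)
      fun Y => F (blk m' (t+1) x Y) * gseq Q x (Len m' (t+1)) Y) ?_
    have hpt : ∀ (U : Fin m' → S) (G : Fin (m'+2) → S) (W : Fin (Len m' t) → S),
        F (blk m' (t+1) x (Fin.append U (Fin.append G W)))
          * gseq Q x (Len m' (t+1)) (Fin.append U (Fin.append G W))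
        = gseq Q x m' U *
            (gseq Q (lastc x U) (m'+2) G *
              (F (Fin.cons (Fin.cons x U) (blk m' t (lastc (lastc x U) G) W))
                * gseq Q (lastc (lastc x U) G) (Len m' t) W)) := by
      intro U G W
      have hb : blk m' (t+1) x (Fin.append U (Fin.append G W))
          = Fin.cons (Fin.cons x U) (blk m' t (lastc (lastc x U) G) W) := by
        rw [show blk m' (t+1) x (Fin.append U (Fin.append G W))
            = Fin.cons (Fin.cons x (fun i =>
                  Fin.append U (Fin.append G W) (Fin.castAdd ((m'+2) + Len m' t) i)))
                (blk m' t (Fin.append U (Fin.append G W)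
                    (Fin.natAdd m' (Fin.castAdd (Len m' t) (Fin.last (m'+1)))))
                  (fun i => Fin.append U (Fin.append G W) (Fin.natAdd m' (Fin.natAdd (m'+2) i))))
          from rfl]
        have hU : (fun i => Fin.append U (Fin.append G W) (Fin.castAdd ((m'+2) + Len m' t) i)) = U :=
          funext fun i => Fin.append_left U _ i
        rw [hU]
        have hz : Fin.append U (Fin.append G W)
            (Fin.natAdd m' (Fin.castAdd (Len m' t) (Fin.last (m'+1)))) = lastc (lastc x U) G := by
          rw [Fin.append_right, Fin.append_left, lastc_succ]
        have hW : (fun i => Fin.append U (Fin.append G W) (Fin.natAdd m' (Fin.natAdd (m'+2) i))) = W :=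
          funext fun i => by rw [Fin.append_right, Fin.append_right]
        rw [hz, hW]
      have hg : gseq Q x (Len m' (t+1)) (Fin.append U (Fin.append G W))
          = gseq Q x m' U *
              (gseq Q (lastc x U) (m'+2) G * gseq Q (lastc (lastc x U) G) (Len m' t) W) := by
        refine Eq.trans (gseq_append Q ((m'+2) + Len m' t) m' x U (Fin.append G W)) ?_
        rw [gseq_append Q (Len m' t) (m'+2) (lastc x U) G W]
      rw [hb, hg]; ring
    calc (∑ U : Fin m' → S, ∑ V : Fin ((m'+2) + Len m' t) → S,
            F (blk m' (t+1) x (Fin.append U V)) * gseq Q x (Len m' (t+1)) (Fin.append U V))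
        = ∑ U : Fin m' → S, ∑ G : Fin (m'+2) → S, ∑ W : Fin (Len m' t) → S,
            F (blk m' (t+1) x (Fin.append U (Fin.append G W)))
              * gseq Q x (Len m' (t+1)) (Fin.append U (Fin.append G W)) := by
          refine Finset.sum_congr rfl fun U _ => ?_
          exact sum_append_fun (m'+2) (Len m' t) _
      _ = ∑ U : Fin m' → S, gseq Q x m' U *
            ∑ G : Fin (m'+2) → S, gseq Q (lastc x U) (m'+2) G *
              (∑ W : Fin (Len m' t) → S,
                F (Fin.cons (Fin.cons x U) (blk m' t (lastc (lastc x U) G) W))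
                  * gseq Q (lastc (lastc x U) G) (Len m' t) W) := by
          refine Finset.sum_congr rfl fun U _ => ?_
          rw [Finset.mul_sum]
          refine Finset.sum_congr rfl fun G _ => ?_
          rw [Finset.mul_sum, Finset.mul_sum]
          exact Finset.sum_congr rfl fun W _ => hpt U G W
      _ = ∑ U : Fin m' → S, gseq Q x m' U *
            ∑ z, (Q^(m'+2)) (lastc x U) z *
              (∑ W : Fin (Len m' t) → S,
                F (Fin.cons (Fin.cons x U) (blk m' t z W)) * gseq Q z (Len m' t) W) := by
          refine Finset.sum_congr rfl fun U _ => ?_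
          exact congrArg _ (sum_gseq_lastc Q (m'+2) (lastc x U)
            (fun z => ∑ W : Fin (Len m' t) → S,
              F (Fin.cons (Fin.cons x U) (blk m' t z W)) * gseq Q z (Len m' t) W))
      _ = ∑ b : Fin m' → S, ∑ a : Fin (t+1) → (Fin (m'+1) → S),
            F (Fin.cons (Fin.cons x b) a)
              * (gseq Q x m' b * gvF Q m' (fun y => (Q^(m'+2)) (lastc x b) y) (t+1) a) := by
          refine Finset.sum_congr rfl fun b _ => ?_
          have hIH : ∀ z, (∑ W : Fin (Len m' t) → S,
              F (Fin.cons (Fin.cons x b) (blk m' t z W)) * gseq Q z (Len m' t) W)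
              = ∑ b' : Fin m' → S, ∑ a' : Fin t → (Fin (m'+1) → S),
                  F (Fin.cons (Fin.cons x b) (Fin.cons (Fin.cons z b') a'))
                    * (gseq Q z m' b'
                      * gvF Q m' (fun y => (Q^(m'+2)) (lastc z b') y) t a') := by
            intro z
            exact ih z (fun v => F (Fin.cons (Fin.cons x b) v))
          simp only [hIH]
          conv_rhs => rw [sum_cons_fun t
            (fun a => F (Fin.cons (Fin.cons x b) a)
              * (gseq Q x m' b * gvF Q m' (fun y => (Q^(m'+2)) (lastc x b) y) (t+1) a))]
          simp only [gvF_cons]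
          conv_rhs => rw [sum_cons_fun m'
            (fun b₁ => ∑ a' : Fin t → (Fin (m'+1) → S),
              F (Fin.cons (Fin.cons x b) (Fin.cons b₁ a'))
                * (gseq Q x m' b * ((Q^(m'+2)) (lastc x b) (b₁ 0) * wb Q m' b₁
                    * gvF Q m' (fun y => (Q^(m'+2)) (b₁ (Fin.last m')) y) t a')))]
          simp only [Fin.cons_zero, wb_cons, hlc]
          simp only [Finset.mul_sum]
          refine Finset.sum_congr rfl fun z _ => ?_
          refine Finset.sum_congr rfl fun b' _ => ?_
          refine Finset.sum_congr rfl fun a' _ => ?_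
          ring
  
lemma prodgseq : ∀ (k : ℕ) (X : Fin (k+1) → S) (f g : Fin k → Fin (k+1)),
    (∀ t, (f t).1 = t.1) → (∀ t, (g t).1 = t.1 + 1) →
    ∏ t, Q (X (f t)) (X (g t)) = gseq Q (X 0) k (Fin.tail X) := by
  intro k
  induction k with
  | zero =>
    intro X f g hf hg
    simp [gseq]
  | succ k ihk =>
    intro X f g hf hg
    rw [Fin.prod_univ_succ]
    have h0f : X (f 0) = X 0 := congrArg X (Fin.ext (by rw [hf 0]; rfl))
    have h0g : X (g 0) = Fin.tail X 0 := congrArg X (Fin.ext (by rw [hg 0]; rfl))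
    have hrest : (∏ t : Fin k, Q (X (f t.succ)) (X (g t.succ)))
        = gseq Q (Fin.tail X 0) k (Fin.tail (Fin.tail X)) := by
      have h := ihk (Fin.tail X) (fun t => ⟨t.1, by omega⟩) (fun t => ⟨t.1+1, by omega⟩)
        (fun t => rfl) (fun t => rfl)
      rw [← h]
      refine Finset.prod_congr rfl fun t _ => ?_
      simp only [Fin.tail]
      congr 1
      · exact congrArg X (Fin.ext (by simp [hf]))
      · exact congrArg X (Fin.ext (by simp [hg]))
    rw [h0f, h0g, hrest]
    exact (gseq_succ' Q k (X 0) (Fin.tail X)).symm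

lemma sum_P_last (hQ1 : ∀ x, ∑ y, Q x y = 1) (π : S → ℝ)
    (hπstat : ∀ y, ∑ x, π x * Q x y = π y) (ψ : S → ℝ) :
    ∑ b : Fin (m'+1) → S, (π (b 0) * wb Q m' b) * ψ (b (Fin.last m'))
      = ∑ z, π z * ψ z := by
  have hlc : ∀ (z : S) (b' : Fin m' → S),
      (Fin.cons z b' : Fin (m'+1) → S) (Fin.last m') = lastc z b' := fun _ _ => rfl
  rw [sum_cons_fun m' (fun b => (π (b 0) * wb Q m' b) * ψ (b (Fin.last m')))]
  simp only [Fin.cons_zero, wb_cons, hlc]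
  have h1 : ∀ x, ∑ b' : Fin m' → S, (π x * gseq Q x m' b') * ψ (lastc x b')
      = π x * ∑ z, (Q^m') x z * ψ z := by
    intro x
    rw [← sum_gseq_lastc Q m' x ψ, Finset.mul_sum]
    exact Finset.sum_congr rfl fun b' _ => by ring
  simp only [h1]
  simp only [Finset.mul_sum]
  rw [Finset.sum_comm]
  refine Finset.sum_congr rfl fun z _ => ?_
  calc ∑ x, π x * ((Q^m') x z * ψ z) = (∑ x, π x * (Q^m') x z) * ψ z := by
        rw [Finset.sum_mul]; exact Finset.sum_congr rfl fun x _ => by ring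
    _ = π z * ψ z := by rw [statPow Q π hπstat]

lemma sum_P (hQ1 : ∀ x, ∑ y, Q x y = 1) (π : S → ℝ) (hπ1 : ∑ x, π x = 1)
    (hπstat : ∀ y, ∑ x, π x * Q x y = π y) :
    ∑ b : Fin (m'+1) → S, π (b 0) * wb Q m' b = 1 := by
  have h := sum_P_last Q m' hQ1 π hπstat (fun _ => 1)
  simp only [mul_one] at h
  rw [h, hπ1]

lemma sum_prod_fun {β : Type} [Fintype β] :
    ∀ (t : ℕ) (g : β → ℝ), ∑ a : Fin t → β, ∏ j, g (a j) = (∑ b, g b)^t := by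
  intro t
  induction t with
  | zero => intro g; simp
  | succ t ih =>
    intro g
    rw [sum_cons_fun t (fun a : Fin (t+1) → β => ∏ j, g (a j)), pow_succ]
    have h1 : ∀ (x : β) (a : Fin t → β),
        (∏ j, g ((Fin.cons x a : Fin (t+1) → β) j)) = g x * ∏ j, g (a j) := by
      intro x a
      rw [Fin.prod_univ_succ, Fin.cons_zero]
      simp only [Fin.cons_succ]
    simp only [h1]
    rw [show (∑ x : β, ∑ a : Fin t → β, g x * ∏ j, g (a j))
        = ∑ x : β, g x * ∑ a : Fin t → β, ∏ j, g (a j) from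
      Finset.sum_congr rfl fun x _ => by rw [Finset.mul_sum]]
    simp only [ih]
    rw [← Finset.sum_mul]
    ring

lemma KL (hQ0 : ∀ x y, 0 ≤ Q x y) (hQ1 : ∀ x, ∑ y, Q x y = 1) (π : S → ℝ)
    (hπ0 : ∀ x, 0 ≤ π x) (hπ1 : ∑ x, π x = 1)
    (hπstat : ∀ y, ∑ x, π x * Q x y = π y) :
    ∀ (t : ℕ) (f : S → ℝ), (∀ z, 0 ≤ f z) →
    ∑ a : Fin t → (Fin (m'+1) → S),
        |gvF Q m' f t a - ∏ j, (π (a j 0) * wb Q m' (a j))|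
      ≤ (∑ z, |f z - π z|)
        + (t : ℝ) * (∑ x, π x * ∑ z, |(Q^(m'+2)) x z - π z|) := by
  have hpow : ∀ (n : ℕ) (x y : S), 0 ≤ (Q^n) x y := by
    intro n
    induction n with
    | zero => intro x y; rw [pow_zero]; by_cases h : x = y <;> simp [Matrix.one_apply, h]
    | succ n ih =>
      intro x y
      rw [pow_succ, Matrix.mul_apply]
      exact Finset.sum_nonneg fun z _ => mul_nonneg (ih x z) (hQ0 z y)
  have hcnn : 0 ≤ ∑ x, π x * ∑ z, |(Q^(m'+2)) x z - π z| :=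
    Finset.sum_nonneg fun x _ => mul_nonneg (hπ0 x)
      (Finset.sum_nonneg fun z _ => abs_nonneg _)
  intro t
  induction t with
  | zero =>
    intro f hf
    have : ∑ a : Fin 0 → (Fin (m'+1) → S),
        |gvF Q m' f 0 a - ∏ j, (π (a j 0) * wb Q m' (a j))| = 0 := by
      simp [show ∀ a : Fin 0 → (Fin (m'+1) → S), gvF Q m' f 0 a = 1 from fun _ => rfl]
    rw [this]
    push_cast
    have : 0 ≤ ∑ z, |f z - π z| := Finset.sum_nonneg fun z _ => abs_nonneg _
    linarith
  | succ t ih =>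
    intro f hf
    set c := ∑ x, π x * ∑ z, |(Q^(m'+2)) x z - π z| with hc
    rw [sum_cons_fun t (fun a : Fin (t+1) → (Fin (m'+1) → S) =>
      |gvF Q m' f (t+1) a - ∏ j, (π (a j 0) * wb Q m' (a j))|)]
    have hpt : ∀ (b : Fin (m'+1) → S) (a' : Fin t → (Fin (m'+1) → S)),
        |gvF Q m' f (t+1) (Fin.cons b a')
          - ∏ j, (π ((Fin.cons b a' : Fin (t+1) → _) j 0) * wb Q m' ((Fin.cons b a' : Fin (t+1) → _) j))|
        ≤ wb Q m' b * (|f (b 0) - π (b 0)|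
            * gvF Q m' (fun y => (Q^(m'+2)) (b (Fin.last m')) y) t a'
          + π (b 0) * |gvF Q m' (fun y => (Q^(m'+2)) (b (Fin.last m')) y) t a'
              - ∏ j, (π (a' j 0) * wb Q m' (a' j))|) := by
      intro b a'
      have hprod : (∏ j, (π ((Fin.cons b a' : Fin (t+1) → _) j 0)
            * wb Q m' ((Fin.cons b a' : Fin (t+1) → _) j)))
          = (π (b 0) * wb Q m' b) * ∏ j, (π (a' j 0) * wb Q m' (a' j)) := by
        rw [Fin.prod_univ_succ, Fin.cons_zero]
        simp only [Fin.cons_succ]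
      rw [gvF_cons, hprod]
      set G := gvF Q m' (fun y => (Q^(m'+2)) (b (Fin.last m')) y) t a' with hG
      set P := ∏ j, (π (a' j 0) * wb Q m' (a' j)) with hP
      have hGnn : 0 ≤ G := gvF_nonneg Q m' hQ0 t _ (fun z => hpow (m'+2) _ z) a'
      have hwnn : 0 ≤ wb Q m' b := gseq_nonneg Q hQ0 m' _ _
      have key : f (b 0) * wb Q m' b * G - π (b 0) * wb Q m' b * P
          = wb Q m' b * ((f (b 0) - π (b 0)) * G + π (b 0) * (G - P)) := by ring
      rw [key, abs_mul, abs_of_nonneg hwnn]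
      refine mul_le_mul_of_nonneg_left ?_ hwnn
      refine le_trans (abs_add_le _ _) ?_
      rw [abs_mul, abs_mul, abs_of_nonneg hGnn, abs_of_nonneg (hπ0 _)]
    refine le_trans (Finset.sum_le_sum fun b _ => Finset.sum_le_sum fun a' _ => hpt b _) ?_
    have hGsum : ∀ b : Fin (m'+1) → S,
        ∑ a' : Fin t → (Fin (m'+1) → S),
          gvF Q m' (fun y => (Q^(m'+2)) (b (Fin.last m')) y) t a' = 1 :=
      fun b => gvF_sum Q m' hQ1 t _ (rowsum_pow Q hQ1 (m'+2) _)
    have hinner : ∀ b : Fin (m'+1) → S,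
        (∑ a' : Fin t → (Fin (m'+1) → S),
          wb Q m' b * (|f (b 0) - π (b 0)|
            * gvF Q m' (fun y => (Q^(m'+2)) (b (Fin.last m')) y) t a'
          + π (b 0) * |gvF Q m' (fun y => (Q^(m'+2)) (b (Fin.last m')) y) t a'
              - ∏ j, (π (a' j 0) * wb Q m' (a' j))|))
        ≤ wb Q m' b * |f (b 0) - π (b 0)|
          + (π (b 0) * wb Q m' b) *
              ((∑ z, |(Q^(m'+2)) (b (Fin.last m')) z - π z|) + (t : ℝ) * c) := by
      intro b
      have hwnn : 0 ≤ wb Q m' b := gseq_nonneg Q hQ0 m' _ _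
      rw [← Finset.mul_sum, Finset.sum_add_distrib, ← Finset.mul_sum, ← Finset.mul_sum,
        hGsum b, mul_one]
      have h2 := ih (fun y => (Q^(m'+2)) (b (Fin.last m')) y) (fun z => hpow (m'+2) _ z)
      calc wb Q m' b * (|f (b 0) - π (b 0)| + π (b 0) *
              ∑ a' : Fin t → (Fin (m'+1) → S),
                |gvF Q m' (fun y => (Q^(m'+2)) (b (Fin.last m')) y) t a'
                  - ∏ j, (π (a' j 0) * wb Q m' (a' j))|)
          ≤ wb Q m' b * (|f (b 0) - π (b 0)| + π (b 0) *
              ((∑ z, |(Q^(m'+2)) (b (Fin.last m')) z - π z|) + (t : ℝ) * c)) := by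
            refine mul_le_mul_of_nonneg_left ?_ hwnn
            have := mul_le_mul_of_nonneg_left h2 (hπ0 (b 0))
            linarith
        _ = wb Q m' b * |f (b 0) - π (b 0)|
            + (π (b 0) * wb Q m' b) *
                ((∑ z, |(Q^(m'+2)) (b (Fin.last m')) z - π z|) + (t : ℝ) * c) := by ring
    refine le_trans (Finset.sum_le_sum fun b _ => hinner b) ?_
    rw [Finset.sum_add_distrib]
    have e1 : ∑ b : Fin (m'+1) → S, wb Q m' b * |f (b 0) - π (b 0)|
        = ∑ z, |f z - π z| := by
      rw [sum_cons_fun m' (fun b => wb Q m' b * |f (b 0) - π (b 0)|)]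
      simp only [wb_cons, Fin.cons_zero]
      have : ∀ x, ∑ b' : Fin m' → S, gseq Q x m' b' * |f x - π x| = |f x - π x| := by
        intro x
        rw [← Finset.sum_mul, gseq_sum Q hQ1, one_mul]
      simp only [this]
    have e2 : ∑ b : Fin (m'+1) → S, (π (b 0) * wb Q m' b) *
          ((∑ z, |(Q^(m'+2)) (b (Fin.last m')) z - π z|) + (t : ℝ) * c)
        = c + (t : ℝ) * c := by
      rw [sum_P_last Q m' hQ1 π hπstat
        (fun w => (∑ z, |(Q^(m'+2)) w z - π z|) + (t : ℝ) * c)]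
      have h3 : ∑ z, π z * ((∑ w, |(Q^(m'+2)) z w - π w|) + (t : ℝ) * c)
          = (∑ z, π z * ∑ w, |(Q^(m'+2)) z w - π w|) + (∑ z, π z) * ((t : ℝ) * c) := by
        rw [Finset.sum_mul, ← Finset.sum_add_distrib]
        exact Finset.sum_congr rfl fun z _ => by ring
      rw [h3, hπ1, one_mul, ← hc]
    rw [e1, e2]
    push_cast
    linarith

lemma abs_sum_ind {ι : Type} [Fintype ι] (F d : ι → ℝ) (hF : ∀ i, F i = 0 ∨ F i = 1)
    (hd : ∑ i, d i = 0) : |∑ i, F i * d i| ≤ (∑ i, |d i|) / 2 := by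
  have h2 : ∑ i, (2 * F i - 1) * d i = 2 * ∑ i, F i * d i := by
    calc ∑ i, (2 * F i - 1) * d i = ∑ i, (2 * (F i * d i) - d i) :=
          Finset.sum_congr rfl fun i _ => by ring
      _ = (∑ i, 2 * (F i * d i)) - ∑ i, d i := Finset.sum_sub_distrib _ _
      _ = 2 * ∑ i, F i * d i := by rw [hd, sub_zero, ← Finset.mul_sum]
  have habs : |∑ i, (2 * F i - 1) * d i| ≤ ∑ i, |d i| := by
    refine le_trans (Finset.abs_sum_le_sum_abs _ _) (Finset.sum_le_sum fun i _ => ?_)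
    rw [abs_mul]
    rcases hF i with h | h <;> rw [h] <;> norm_num
  rw [h2, abs_mul, abs_two] at habs
  linarith [abs_nonneg (∑ i, F i * d i)]

end Aux

set_option maxHeartbeats 1000000 in
/-- Independent block comparison. For the stationary chain of length
`T = 2τm`, the joint law `ν` of the τ 'odd' blocks `(z_t)_{t ∈ H_j}`,
`H_j = {2(j−1)m+1, ..., (2j−1)m}`, differs from the product `ν̃` of its (common) block
marginals by at most `τ·β(m)` on every event `A ⊆ (S^m)^τ`. -/
theorem stmt_8
    {S : Type} [Fintype S] [Nonempty S] [DecidableEq S]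
    (Q : Matrix S S ℝ) (hQ0 : ∀ x y, 0 ≤ Q x y) (hQ1 : ∀ x, ∑ y, Q x y = 1)
    (π : S → ℝ) (hπ0 : ∀ x, 0 ≤ π x) (hπ1 : ∑ x, π x = 1)
    (hπstat : ∀ y, ∑ x, π x * Q x y = π y)
    -- the β-mixing coefficient of the chain
    (β : ℕ → ℝ)
    (hβ : ∀ k : ℕ, β k = ∑ x, π x * ((1 / 2) * ∑ y, |(Q ^ k) x y - π y|))
    (m τ' : ℕ) (hm : 1 ≤ m) (hτ : 1 ≤ τ')
    (T : ℕ) (hT : T = 2 * τ' * m)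
    -- idx j t is the (0-indexed) position in {1,...,T} of the t-th element of block H_{j+1}:
    -- H_j = {2(j−1)m+1, ..., (2j−1)m} (1-indexed) corresponds to {2jm, ..., 2jm+m−1} (0-indexed)
    (idx : Fin τ' → Fin m → Fin T)
    (hidx : ∀ (j : Fin τ') (t : Fin m), (idx j t : ℕ) = 2 * j.1 * m + t.1)
    -- the stationary chain of length T, with states z_1, ..., z_T
    (prob : (Fin T → S) → ℝ)
    (hprob : ∀ X, prob X =
      π (X ⟨0, by rw [hT]; exact Nat.mul_pos (Nat.mul_pos (by norm_num) hτ) hm⟩) *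
      ∏ t : Fin (T - 1),
        Q (X (Fin.castLE (Nat.sub_le T 1) t)) (X ⟨t.1 + 1, by have := t.isLt; omega⟩)) :
    -- the stationary chain of length m (the common marginal law of each block)
    ∀ probm : (Fin m → S) → ℝ,
      (∀ Y, probm Y =
        π (Y ⟨0, hm⟩) *
        ∏ t : Fin (m - 1),
          Q (Y (Fin.castLE (Nat.sub_le m 1) t)) (Y ⟨t.1 + 1, by have := t.isLt; omega⟩)) →
    ∀ A : Set (Fin τ' → Fin m → S),
      |(∑ X, ({X' | (fun j t => X' (idx j t)) ∈ A} : Set (Fin T → S)).indicator prob X)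
        - ∑ a, A.indicator (fun a' => ∏ j, probm (a' j)) a| ≤ (τ' : ℝ) * β m := by
  intro probm hprobm A
  classical
  obtain ⟨m', rfl⟩ : ∃ k, m = k + 1 := ⟨m - 1, by omega⟩
  obtain ⟨τ, rfl⟩ : ∃ k, τ' = k + 1 := ⟨τ' - 1, by omega⟩
  have hT2 : T = Len m' τ + 1 := by have := Len_val m' τ; omega
  subst hT2
  set F0 : (Fin (τ+1) → Fin (m'+1) → S) → ℝ := fun a => if a ∈ A then 1 else 0 with hF0
  have hib : ∀ (j : Fin (τ+1)) (t : Fin (m'+1)), 2*j.1*(m'+1) + t.1 < Len m' τ + 1 := by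
    intro j t
    have hv := Len_val m' τ
    have h2 : 2*(τ+1)*(m'+1) = 2*τ*(m'+1) + 2*(m'+1) := by ring
    have h1 : 2*j.1*(m'+1) ≤ 2*τ*(m'+1) :=
      Nat.mul_le_mul_right (m'+1) (by have := j.isLt; omega)
    have ht := t.isLt
    omega
  have hprobm' : ∀ Y : Fin (m'+1) → S, probm Y = π (Y 0) * wb Q m' Y := by
    intro Y
    rw [hprobm Y]
    have h0 : Y ⟨0, hm⟩ = Y 0 := congrArg Y (Fin.ext (by simp))
    rw [h0]
    congr 1
    exact prodgseq Q m' Y _ _ (fun t => rfl) (fun t => rfl)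
  have hfirst : (∑ X, ({X' | (fun j t => X' (idx j t)) ∈ A} : Set (Fin (Len m' τ + 1) → S)).indicator prob X)
      = ∑ a, F0 a * gvF Q m' π (τ+1) a := by
    have hlc : ∀ (z : S) (b' : Fin m' → S),
        (Fin.cons z b' : Fin (m'+1) → S) (Fin.last m') = lastc z b' := fun _ _ => rfl
    calc (∑ X, ({X' | (fun j t => X' (idx j t)) ∈ A} : Set (Fin (Len m' τ + 1) → S)).indicator prob X)
        = ∑ X : Fin (Len m' τ + 1) → S, F0 (fun j t => X (idx j t)) * prob X := by
          refine Finset.sum_congr rfl fun X _ => ?_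
          rw [Set.indicator_apply]
          simp only [Set.mem_setOf_eq, hF0]
          split <;> simp
      _ = ∑ x, ∑ Y : Fin (Len m' τ) → S,
            π x * (F0 (blk m' τ x Y) * gseq Q x (Len m' τ) Y) := by
          rw [sum_cons_fun (Len m' τ) (fun X => F0 (fun j t => X (idx j t)) * prob X)]
          refine Finset.sum_congr rfl fun x _ => Finset.sum_congr rfl fun Y _ => ?_
          have hFa : (fun (j : Fin (τ+1)) (t : Fin (m'+1)) => (Fin.cons x Y : Fin (Len m' τ + 1) → S) (idx j t))
              = blk m' τ x Y := by
            funext j t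
            have hidx' : idx j t = (⟨2*j.1*(m'+1) + t.1, hib j t⟩ : Fin (Len m' τ + 1)) :=
              Fin.ext (hidx j t)
            rw [hidx']
            exact (blk_apply m' τ x Y j t (hib j t)).symm
          have hprob' : prob (Fin.cons x Y) = π x * gseq Q x (Len m' τ) Y := by
            rw [hprob]
            congr 1
            exact Eq.trans
              (prodgseq Q (Len m' τ) (Fin.cons x Y) _ _ (fun t => rfl) (fun t => rfl))
              (by rw [Fin.cons_zero, Fin.tail_cons])
          rw [hFa, hprob']
          ring
      _ = ∑ a, F0 a * gvF Q m' π (τ+1) a := by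
          have h1 : ∀ x, ∑ Y : Fin (Len m' τ) → S,
              π x * (F0 (blk m' τ x Y) * gseq Q x (Len m' τ) Y)
              = π x * ∑ b : Fin m' → S, ∑ a' : Fin τ → (Fin (m'+1) → S),
                  F0 (Fin.cons (Fin.cons x b) a')
                    * (gseq Q x m' b * gvF Q m' (fun y => (Q^(m'+2)) (lastc x b) y) τ a') := by
            intro x
            rw [← Finset.mul_sum, claimB Q m' hQ1 τ x F0]
          simp only [h1]
          conv_rhs => rw [sum_cons_fun τ (fun a => F0 a * gvF Q m' π (τ+1) a)]
          simp only [gvF_cons]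
          conv_rhs => rw [sum_cons_fun m' (fun b₁ => ∑ a' : Fin τ → (Fin (m'+1) → S),
            F0 (Fin.cons b₁ a') * (π (b₁ 0) * wb Q m' b₁
              * gvF Q m' (fun y => (Q^(m'+2)) (b₁ (Fin.last m')) y) τ a'))]
          simp only [Fin.cons_zero, wb_cons, hlc]
          simp only [Finset.mul_sum]
          refine Finset.sum_congr rfl fun x _ => ?_
          refine Finset.sum_congr rfl fun b _ => ?_
          refine Finset.sum_congr rfl fun a' _ => ?_
          ring
  have hsecond : (∑ a, A.indicator (fun a' => ∏ j, probm (a' j)) a)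
      = ∑ a, F0 a * ∏ j, (π (a j 0) * wb Q m' (a j)) := by
    refine Finset.sum_congr rfl fun a _ => ?_
    rw [Set.indicator_apply]
    simp only [hprobm', hF0]
    split <;> simp
  rw [hfirst, hsecond]
  set d : (Fin (τ+1) → Fin (m'+1) → S) → ℝ :=
    fun a => gvF Q m' π (τ+1) a - ∏ j, (π (a j 0) * wb Q m' (a j)) with hd
  have hcomb : (∑ a, F0 a * gvF Q m' π (τ+1) a)
      - (∑ a, F0 a * ∏ j, (π (a j 0) * wb Q m' (a j)))
      = ∑ a, F0 a * d a := by
    rw [← Finset.sum_sub_distrib]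
    exact Finset.sum_congr rfl fun a _ => by rw [hd]; ring
  rw [hcomb]
  have hd0 : ∑ a, d a = 0 := by
    simp only [hd]
    rw [Finset.sum_sub_distrib, gvF_sum Q m' hQ1 (τ+1) π hπ1,
      sum_prod_fun (τ+1) (fun b : Fin (m'+1) → S => π (b 0) * wb Q m' b),
      sum_P Q m' hQ1 π hπ1 hπstat, one_pow, sub_self]
  have habs := abs_sum_ind F0 d
    (fun a => by rw [hF0]; dsimp only; split; exacts [Or.inr rfl, Or.inl rfl]) hd0
  have hKL := KL Q m' hQ0 hQ1 π hπ0 hπ1 hπstat (τ+1) π hπ0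
  have hKL' : ∑ a, |d a| ≤ ((τ:ℝ)+1) * (∑ x, π x * ∑ z, |(Q^(m'+2)) x z - π z|) := by
    simp only [hd]
    refine le_trans hKL ?_
    simp only [sub_self, abs_zero, Finset.sum_const_zero, zero_add]
    push_cast
    exact le_refl _
  have hc2 : (∑ x, π x * ∑ z, |(Q^(m'+2)) x z - π z|) ≤ 2 * β (m'+1) := by
    have h2β : 2 * β (m'+1) = ∑ x, π x * ∑ y, |(Q^(m'+1)) x y - π y| := by
      rw [hβ (m'+1), Finset.mul_sum]
      exact Finset.sum_congr rfl fun x _ => by ring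
    rw [h2β]
    have hkey : ∀ x, ∑ z, |(Q^(m'+2)) x z - π z|
        ≤ ∑ y, Q x y * ∑ z, |(Q^(m'+1)) y z - π z| := by
      intro x
      have hp : ∀ z, (Q^(m'+2)) x z - π z = ∑ y, Q x y * ((Q^(m'+1)) y z - π z) := by
        intro z
        rw [eq_comm]
        calc ∑ y, Q x y * ((Q^(m'+1)) y z - π z)
            = (∑ y, Q x y * (Q^(m'+1)) y z) - (∑ y, Q x y) * π z := by
              rw [Finset.sum_mul, ← Finset.sum_sub_distrib]
              exact Finset.sum_congr rfl fun y _ => by ring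
          _ = (Q^(m'+2)) x z - π z := by
              rw [hQ1, one_mul,
                show (Q^(m'+2) : Matrix S S ℝ) = Q * Q^(m'+1) from pow_succ' Q (m'+1),
                Matrix.mul_apply]
      calc ∑ z, |(Q^(m'+2)) x z - π z|
          = ∑ z, |∑ y, Q x y * ((Q^(m'+1)) y z - π z)| := by simp only [hp]
        _ ≤ ∑ z, ∑ y, |Q x y * ((Q^(m'+1)) y z - π z)| :=
            Finset.sum_le_sum fun z _ => Finset.abs_sum_le_sum_abs _ _
        _ = ∑ y, ∑ z, Q x y * |(Q^(m'+1)) y z - π z| := by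
            rw [Finset.sum_comm]
            exact Finset.sum_congr rfl fun y _ => Finset.sum_congr rfl fun z _ => by
              rw [abs_mul, abs_of_nonneg (hQ0 x y)]
        _ = ∑ y, Q x y * ∑ z, |(Q^(m'+1)) y z - π z| :=
            Finset.sum_congr rfl fun y _ => by rw [Finset.mul_sum]
    calc ∑ x, π x * ∑ z, |(Q^(m'+2)) x z - π z|
        ≤ ∑ x, π x * ∑ y, Q x y * ∑ z, |(Q^(m'+1)) y z - π z| :=
          Finset.sum_le_sum fun x _ => mul_le_mul_of_nonneg_left (hkey x) (hπ0 x)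
      _ = ∑ y, (∑ x, π x * Q x y) * ∑ z, |(Q^(m'+1)) y z - π z| := by
          refine Eq.trans (Finset.sum_congr rfl fun x _ => Finset.mul_sum _ _ _)
            (Eq.trans Finset.sum_comm ?_)
          refine Finset.sum_congr rfl fun y _ => ?_
          rw [Finset.sum_mul]
          refine Finset.sum_congr rfl fun x _ => ?_
          ring
      _ = ∑ y, π y * ∑ z, |(Q^(m'+1)) y z - π z| := by
          exact Finset.sum_congr rfl fun y _ => by rw [hπstat]
  have hτnn : (0:ℝ) ≤ (τ:ℝ) + 1 := by positivity
  have hfin : ((τ:ℝ)+1) * (∑ x, π x * ∑ z, |(Q^(m'+2)) x z - π z|)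
      ≤ ((τ:ℝ)+1) * (2 * β (m'+1)) := mul_le_mul_of_nonneg_left hc2 hτnn
  calc |∑ a, F0 a * d a| ≤ (∑ a, |d a|) / 2 := habs
    _ ≤ (((τ:ℝ)+1) * (2 * β (m'+1))) / 2 := by linarith
    _ = ((τ+1 : ℕ) : ℝ) * β (m'+1) := by push_cast; ring
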